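/- Let (R, S) be a right-angled Coxeter system (all off-diagonal Coxeter matrix entries are 2 or ∞), and let R^A be the associated right-angled Artin group on generators S with relations st = ts whenever m(s,t) = 2. Then the group homomorphism φ : R^A → H(R)* determined by φ(s) = T_s, where H(R) is the Hecke algebra of (R,S) over ℤ[q,q⁻¹] and H(R)* its group of units, is injective. -/

import Mathlib

open CoxeterSystem LaurentPolynomial

/-- The Laurent polynomial ring `ℤ[q,q⁻¹]`. -/
noncomputable abbrev LaurentZ : Type := LaurentPolynomial ℤ

/-- The variable `q` of `ℤ[q,q⁻¹]`. -/
noncomputable def qL : LaurentZ := T 1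

variable {B : Type*}

/-- The relations of the right-angled Artin group associated to a Coxeter matrix:
the generators `s, t` commute whenever `m(s,t) = 2`. -/
def artinRels (M : CoxeterMatrix B) : Set (FreeGroup B) :=
  {r | ∃ s t : B, M s t = 2 ∧
    r = FreeGroup.of s * FreeGroup.of t * (FreeGroup.of s)⁻¹ * (FreeGroup.of t)⁻¹}

/-- The right-angled Artin group of a Coxeter matrix. -/
def ArtinGroup (M : CoxeterMatrix B) : Type _ := PresentedGroup (artinRels M)

instance (M : CoxeterMatrix B) : Group (ArtinGroup M) :=
  inferInstanceAs (Group (PresentedGroup (artinRels M)))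

set_option linter.unusedSectionVars false
section Rep
variable {B : Type*} [DecidableEq B] (M : CoxeterMatrix B)

noncomputable def rcoef (i j : B) : ℤ := if j = i then -2 else if M i j = 0 then 2 else 0

noncomputable def ralpha (i : B) : B →₀ ℤ := Finsupp.single i 1

noncomputable def rg (i : B) : (B →₀ ℤ) →ₗ[ℤ] ℤ :=
  Finsupp.linearCombination ℤ (fun j => rcoef M i j)

noncomputable def rsigma (i : B) : Module.End ℤ (B →₀ ℤ) :=
  LinearMap.id + (rg M i).smulRight (ralpha i)

theorem rsigma_apply (i : B) (x : B →₀ ℤ) :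
    rsigma M i x = x + (rg M i x) • ralpha i := rfl

theorem rg_alpha (i j : B) : rg M i (ralpha j) = rcoef M i j := by
  simp [rg, ralpha, Finsupp.linearCombination_single]

theorem rg_rsigma (i : B) (x : B →₀ ℤ) : rg M i (rsigma M i x) = - rg M i x := by
  rw [rsigma_apply, map_add, map_smul, rg_alpha, rcoef, if_pos rfl, smul_eq_mul]
  ring

theorem rsigma_invol (i : B) : rsigma M i * rsigma M i = 1 := by
  apply LinearMap.ext
  intro x
  show rsigma M i (rsigma M i x) = x
  rw [rsigma_apply M i (rsigma M i x), rg_rsigma, rsigma_apply, neg_smul]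
  abel

theorem rsigma_alpha_self (i : B) : rsigma M i (ralpha i) = - ralpha i := by
  rw [rsigma_apply, rg_alpha, rcoef, if_pos rfl]
  module

theorem rsigma_alpha_two (i j : B) (h : M i j = 2) (hne : j ≠ i) :
    rsigma M i (ralpha j) = ralpha j := by
  rw [rsigma_apply, rg_alpha, rcoef, if_neg hne, if_neg (by omega), zero_smul, add_zero]

theorem rsigma_alpha_zero (i j : B) (h : M i j = 0) :
    rsigma M i (ralpha j) = ralpha j + (2:ℤ) • ralpha i := by
  have hne : j ≠ i := by rintro rfl; have := M.diagonal j; omega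
  rw [rsigma_apply, rg_alpha, rcoef, if_neg hne, if_pos h]

theorem rsigma_comm (i j : B) (hij : M i j = 2) :
    rsigma M i * rsigma M j = rsigma M j * rsigma M i := by
  have hji : M j i = 2 := by rw [M.symmetric]; exact hij
  have hne : i ≠ j := by rintro rfl; have := M.diagonal i; omega
  apply LinearMap.ext
  intro x
  show rsigma M i (rsigma M j x) = rsigma M j (rsigma M i x)
  rw [rsigma_apply M j x, rsigma_apply M i x,
    rsigma_apply M i _, rsigma_apply M j _, map_add, map_add, map_smul, map_smul,
    rg_alpha, rg_alpha, rcoef, rcoef, if_neg hne, if_neg (Ne.symm hne),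
    if_neg (by omega : ¬ M i j = 0), if_neg (by omega : ¬ M j i = 0)]
  simp only [smul_zero, add_zero, smul_eq_mul, mul_zero]
  abel

theorem rsigma_liftable (hra : ∀ s t : B, s ≠ t → M s t = 2 ∨ M s t = 0) :
    CoxeterMatrix.IsLiftable M (fun i => rsigma M i) := by
  intro i j
  dsimp only
  rcases eq_or_ne i j with rfl | hne
  · rw [M.diagonal, pow_one]
    exact rsigma_invol M i
  rcases hra i j hne with h2 | h0
  · rw [h2, sq, mul_assoc, ← mul_assoc (rsigma M j), ← rsigma_comm M i j h2,
      mul_assoc (rsigma M i), ← mul_assoc, rsigma_invol, one_mul, rsigma_invol]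
  · rw [h0, pow_zero]

end Rep

section Cox
variable {B : Type*} [DecidableEq B] {R : Type*} [Group R] {M : CoxeterMatrix B}
  (cs : CoxeterSystem M R) (hra : ∀ s t : B, s ≠ t → M s t = 2 ∨ M s t = 0)

/-- The right-angled geometric representation over `ℤ`. -/
noncomputable def rrho : R →* Module.End ℤ (B →₀ ℤ) :=
  cs.lift ⟨fun i => rsigma M i, rsigma_liftable M hra⟩

theorem rrho_simple (i : B) : rrho cs hra (cs.simple i) = rsigma M i :=
  cs.lift_apply_simple _ i

theorem rrho_mul_simple (w : R) (i : B) (x : B →₀ ℤ) :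
    rrho cs hra (w * cs.simple i) x = rrho cs hra w (rsigma M i x) := by
  rw [map_mul, rrho_simple, Module.End.mul_apply]

theorem rrho_ne_zero (w : R) {x : B →₀ ℤ} (hx : x ≠ 0) : rrho cs hra w x ≠ 0 := by
  intro h
  apply hx
  have h2 : rrho cs hra w⁻¹ (rrho cs hra w x) = x := by
    rw [← Module.End.mul_apply, ← map_mul, inv_mul_cancel, map_one, Module.End.one_apply]
  rw [h, map_zero] at h2
  exact h2.symm

theorem ralpha_ne_zero (t : B) : ralpha (B := B) t ≠ 0 := by
  simp [ralpha, Finsupp.single_eq_zero]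

/-- positivity of a vector -/
def RPos (x : B →₀ ℤ) : Prop := ∀ j, 0 ≤ x j

theorem rpos_alpha (t : B) : RPos (ralpha (B := B) t) := by
  intro j
  simp only [ralpha, Finsupp.single_apply]
  split <;> norm_num

theorem simple_comm {i j : B} (h : M i j = 2) :
    cs.simple i * cs.simple j = cs.simple j * cs.simple i := by
  have h1 := cs.simple_mul_simple_pow i j
  rw [h, sq] at h1
  have : cs.simple i * cs.simple j = (cs.simple i * cs.simple j)⁻¹ :=
    eq_inv_of_mul_eq_one_right h1
  rw [this, mul_inv_rev, cs.inv_simple, cs.inv_simple]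

theorem not_descent_mul_simple (w : R) (i : B) (h : cs.IsRightDescent w i) :
    ¬ cs.IsRightDescent (w * cs.simple i) i := by
  intro h2
  unfold CoxeterSystem.IsRightDescent at h h2
  rw [cs.simple_mul_simple_cancel_right] at h2
  omega

theorem length_mul_simple_of_descent {w : R} {i : B} (h : cs.IsRightDescent w i) :
    cs.length (w * cs.simple i) + 1 = cs.length w := by
  rcases cs.length_mul_simple w i with h1 | h1
  · exfalso; unfold CoxeterSystem.IsRightDescent at h; omega
  · exact h1

theorem length_mul_simple_of_not_descent {w : R} {i : B} (h : ¬ cs.IsRightDescent w i) :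
    cs.length (w * cs.simple i) = cs.length w + 1 := by
  rcases cs.length_mul_simple w i with h1 | h1
  · exact h1
  · exfalso; unfold CoxeterSystem.IsRightDescent at h; omega

/-- Key nested lemma: positivity is preserved along alternating descents. -/
theorem SL (n : ℕ)
    (hM : ∀ w : R, cs.length w < n → ∀ t : B, ¬cs.IsRightDescent w t →
      RPos (rrho cs hra w (ralpha t))) :
    ∀ m, m < n → ∀ d : R, cs.length d = m → ∀ t c : B, M t c = 0 → ∀ a b : ℤ, 0 ≤ b → b < a →
      ¬cs.IsRightDescent d t → RPos (rrho cs hra d (a • ralpha t + b • ralpha c)) := by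
  intro m
  induction m using Nat.strong_induction_on with
  | _ m IH =>
    intro hmn d hd t c htc a b hb hba hdt
    have htcne : t ≠ c := by intro h; subst h; have := M.diagonal t; omega
    by_cases hdc : cs.IsRightDescent d c
    · -- peel off a simple reflection c from the right
      set d₁ := d * cs.simple c with hd₁
      have hlen : cs.length d₁ + 1 = cs.length d := length_mul_simple_of_descent cs hdc
      have hd₁c : ¬ cs.IsRightDescent d₁ c := not_descent_mul_simple cs d c hdc
      have hdd : d = d₁ * cs.simple c := by
        rw [hd₁, cs.simple_mul_simple_cancel_right]
      have hvec : rsigma M c (a • ralpha t + b • ralpha c)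
          = (2*a - b) • ralpha c + a • ralpha t := by
        have h1 : rsigma M c (ralpha t) = ralpha t + (2:ℤ) • ralpha c :=
          rsigma_alpha_zero M c t (by rw [M.symmetric]; exact htc)
        have h2 : rsigma M c (ralpha c) = - ralpha c := rsigma_alpha_self M c
        rw [map_add, map_smul, map_smul, h1, h2]
        module
      have := IH (m - 1) (by omega) (by omega) d₁ (by omega) c t
        (by rw [M.symmetric]; exact htc) (2*a - b) a (by omega) (by omega) hd₁c
      rw [hdd, rrho_mul_simple, hvec]
      exact this
    · -- both images are positive
      have h1 := hM d (by omega) t hdt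
      have h2 := hM d (by omega) c hdc
      rw [map_add, map_smul, map_smul]
      intro j
      simp only [Finsupp.add_apply, Finsupp.smul_apply, smul_eq_mul]
      have := h1 j
      have := h2 j
      have ha : 0 ≤ a := le_trans hb hba.le
      positivity


theorem master : ∀ n : ℕ, ∀ w : R, cs.length w = n → ∀ t : B, ¬cs.IsRightDescent w t →
    RPos (rrho cs hra w (ralpha t)) := by
  intro n
  induction n using Nat.strong_induction_on with
  | _ n IH =>
    intro w hw t hwt
    rcases eq_or_ne w 1 with rfl | hne
    · rw [map_one, Module.End.one_apply]
      exact rpos_alpha t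
    · obtain ⟨ω, hred, hw_eq⟩ := cs.exists_reduced_word' w
      have hlen : cs.length w = ω.length := by rw [hw_eq]; exact hred
      have hωne : ω ≠ [] := by
        intro h; subst h; rw [hw_eq, wordProd_nil] at hne; exact hne rfl
      rcases List.eq_nil_or_concat ω with rfl | ⟨ω', c, rfl⟩
      · exact absurd rfl hωne
      rw [List.concat_eq_append] at *
      set w' := cs.wordProd ω' with hw'
      have hred' : cs.IsReduced ω' := by
        have := CoxeterSystem.IsReduced.take hred ω'.length
        rwa [List.take_left] at this
      have hw'c : w = w' * cs.simple c := by
        rw [hw_eq, cs.wordProd_append, wordProd_singleton]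
      have hlw' : cs.length w' = ω'.length := hred'
      have hlw : cs.length w = ω'.length + 1 := by
        rw [hlen, List.length_append, List.length_singleton]
      have hw'nd : ¬ cs.IsRightDescent w' c := by
        unfold CoxeterSystem.IsRightDescent
        rw [← hw'c]
        omega
      by_cases hct : c = t
      · exfalso
        apply hwt
        subst hct
        unfold CoxeterSystem.IsRightDescent
        rw [hw'c, cs.simple_mul_simple_cancel_right, ← hw'c]
        omega
      rcases hra t c (fun h => hct (h.symm)) with h2 | h0
      · -- M t c = 2
        have hw't : ¬ cs.IsRightDescent w' t := by
          intro hdes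
          apply hwt
          have hcomm : cs.simple c * cs.simple t = cs.simple t * cs.simple c :=
            simple_comm cs (by rw [M.symmetric]; exact h2)
          unfold CoxeterSystem.IsRightDescent
          have : w * cs.simple t = (w' * cs.simple t) * cs.simple c := by
            rw [hw'c, mul_assoc, hcomm, mul_assoc]
          rw [this]
          have h3 := cs.length_mul_le (w' * cs.simple t) (cs.simple c)
          rw [cs.length_simple] at h3
          have h4 := length_mul_simple_of_descent cs hdes
          omega
      -- ℓ w' < n
        have hx : rrho cs hra w (ralpha t) = rrho cs hra w' (ralpha t) := by
          rw [hw'c, rrho_mul_simple,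
            rsigma_alpha_two M c t (by rw [M.symmetric]; exact h2) (fun h => hct h.symm)]
        rw [hx]
        exact IH (cs.length w') (by omega) w' rfl t hw't
      · -- M t c = 0
        have hx : rrho cs hra w (ralpha t)
            = rrho cs hra w' (ralpha t + (2:ℤ) • ralpha c) := by
          rw [hw'c, rrho_mul_simple, rsigma_alpha_zero M c t (by rw [M.symmetric]; exact h0)]
        by_cases hw't : cs.IsRightDescent w' t
        · -- peel another letter
          set w'' := w' * cs.simple t with hw''
          have hl2 : cs.length w'' + 1 = cs.length w' := length_mul_simple_of_descent cs hw't
          have hnd2 : ¬ cs.IsRightDescent w'' t := not_descent_mul_simple cs w' t hw't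
          have hw'eq : w' = w'' * cs.simple t := by rw [hw'', cs.simple_mul_simple_cancel_right]
          have hvec : rsigma M t (ralpha t + (2:ℤ) • ralpha c)
              = (3:ℤ) • ralpha t + (2:ℤ) • ralpha c := by
            rw [map_add, map_smul, rsigma_alpha_self, rsigma_alpha_zero M t c h0]
            module
          rw [hx, hw'eq, rrho_mul_simple, hvec]
          exact SL cs hra n (fun v hv s hs => IH (cs.length v) hv v rfl s hs)
            (cs.length w'') (by omega) w'' rfl t c h0 3 2 (by omega) (by omega) hnd2
        · have h1 := IH (cs.length w') (by omega) w' rfl t hw't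
          have h2 := IH (cs.length w') (by omega) w' rfl c hw'nd
          rw [hx, map_add, map_smul]
          intro j
          simp only [Finsupp.add_apply, Finsupp.smul_apply, smul_eq_mul]
          have := h1 j
          have := h2 j
          omega

theorem neg_of_descent (w : R) (t : B) (hd : cs.IsRightDescent w t) :
    (∀ j, rrho cs hra w (ralpha t) j ≤ 0) ∧ rrho cs hra w (ralpha t) ≠ 0 := by
  set w₁ := w * cs.simple t with hw₁
  have hnd : ¬ cs.IsRightDescent w₁ t := not_descent_mul_simple cs w t hd
  have hw : w = w₁ * cs.simple t := by rw [hw₁, cs.simple_mul_simple_cancel_right]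
  have hx : rrho cs hra w (ralpha t) = - rrho cs hra w₁ (ralpha t) := by
    rw [hw, rrho_mul_simple, rsigma_alpha_self, map_neg]
  constructor
  · intro j
    have := master cs hra (cs.length w₁) w₁ rfl t hnd j
    rw [hx]
    simp only [Finsupp.neg_apply]
    omega
  · exact rrho_ne_zero cs hra w (ralpha_ne_zero t)

theorem pos_neg_contradiction {x : B →₀ ℤ} (hpos : RPos x) (hneg : ∀ j, x j ≤ 0)
    (hne : x ≠ 0) : False := by
  apply hne
  ext j
  have := hpos j
  have := hneg j
  simp only [Finsupp.coe_zero, Pi.zero_apply]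
  omega

include hra in
theorem lemmaL : ∀ n : ℕ, ∀ ω : List B, ω.length = n → cs.IsReduced ω → ∀ t : B,
    cs.IsRightDescent (cs.wordProd ω) t →
    ∃ ω₁ ω₂, ω = ω₁ ++ t :: ω₂ ∧ ∀ b ∈ ω₂, M t b = 2 := by
  intro n
  induction n using Nat.strong_induction_on with
  | _ n IH =>
    intro ω hlen hred t hdes
    rcases List.eq_nil_or_concat ω with rfl | ⟨ω', c, rfl⟩
    · exfalso
      rw [wordProd_nil] at hdes
      exact cs.not_isRightDescent_one t hdes
    rw [List.concat_eq_append] at *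
    set w := cs.wordProd (ω' ++ [c]) with hwdef
    set w' := cs.wordProd ω' with hw'
    have hred' : cs.IsReduced ω' := by
      have := CoxeterSystem.IsReduced.take hred ω'.length
      rwa [List.take_left] at this
    have hw'c : w = w' * cs.simple c := by
      rw [hwdef, cs.wordProd_append, wordProd_singleton]
    have hlw' : cs.length w' = ω'.length := hred'
    have hlw : cs.length w = ω'.length + 1 := by
      have : cs.length w = (ω' ++ [c]).length := hred
      rwa [List.length_append, List.length_singleton] at this
    have hn : ω'.length + 1 = n := by rw [← hlen]; simp
    have hw'nd : ¬ cs.IsRightDescent w' c := by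
      unfold CoxeterSystem.IsRightDescent
      rw [← hw'c]
      omega
    by_cases hct : c = t
    · subst hct
      exact ⟨ω', [], rfl, by simp⟩
    rcases hra t c (fun h => hct h.symm) with h2 | h0
    · -- M t c = 2 : descent passes to ω'
      have hw't : cs.IsRightDescent w' t := by
        by_contra hnd
        have hpos := master cs hra (cs.length w') w' rfl t hnd
        have hx : rrho cs hra w (ralpha t) = rrho cs hra w' (ralpha t) := by
          rw [hw'c, rrho_mul_simple,
            rsigma_alpha_two M c t (by rw [M.symmetric]; exact h2) (fun h => hct h.symm)]
        have hneg := neg_of_descent cs hra w t hdes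
        rw [hx] at hneg
        exact pos_neg_contradiction hpos hneg.1 hneg.2
      obtain ⟨ω₁, ω₂, heq, hcomm⟩ := IH ω'.length (by omega) ω' rfl hred' t hw't
      refine ⟨ω₁, ω₂ ++ [c], by rw [heq]; simp, ?_⟩
      intro b hb
      rcases List.mem_append.mp hb with h | h
      · exact hcomm b h
      · rw [List.mem_singleton] at h
        subst h
        exact h2
    · -- M t c = 0 : impossible
      exfalso
      have hneg := neg_of_descent cs hra w t hdes
      have hx : rrho cs hra w (ralpha t)
          = rrho cs hra w' (ralpha t + (2:ℤ) • ralpha c) := by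
        rw [hw'c, rrho_mul_simple, rsigma_alpha_zero M c t (by rw [M.symmetric]; exact h0)]
      by_cases hw't : cs.IsRightDescent w' t
      · set w'' := w' * cs.simple t with hw''
        have hnd2 : ¬ cs.IsRightDescent w'' t := not_descent_mul_simple cs w' t hw't
        have hw'eq : w' = w'' * cs.simple t := by rw [hw'', cs.simple_mul_simple_cancel_right]
        have hvec : rsigma M t (ralpha t + (2:ℤ) • ralpha c)
            = (3:ℤ) • ralpha t + (2:ℤ) • ralpha c := by
          rw [map_add, map_smul, rsigma_alpha_self, rsigma_alpha_zero M t c h0]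
          module
        have hpos := SL cs hra (cs.length w'' + 1)
          (fun v hv s hs => master cs hra (cs.length v) v rfl s hs)
          (cs.length w'') (by omega) w'' rfl t c h0 3 2 (by omega) (by omega) hnd2
        rw [hx, hw'eq, rrho_mul_simple, hvec] at hneg
        exact pos_neg_contradiction hpos hneg.1 hneg.2
      · have h1 := master cs hra (cs.length w') w' rfl t hw't
        have h2 := master cs hra (cs.length w') w' rfl c hw'nd
        have hpos : RPos (rrho cs hra w' (ralpha t + (2:ℤ) • ralpha c)) := by
          rw [map_add, map_smul]
          intro j
          simp only [Finsupp.add_apply, Finsupp.smul_apply, smul_eq_mul]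
          have := h1 j
          have := h2 j
          omega
        rw [hx] at hneg
        exact pos_neg_contradiction hpos hneg.1 hneg.2

include hra in
/-- The right-angled deletion condition. -/
theorem deletion (ω : List B) (hnr : ¬ cs.IsReduced ω) :
    ∃ (ω₁ ω₂ ω₃ : List B) (t : B), ω = ω₁ ++ t :: (ω₂ ++ t :: ω₃) ∧ ∀ b ∈ ω₂, M t b = 2 := by
  classical
  have hex : ∃ k, ¬ cs.IsReduced (ω.take k) := ⟨ω.length, by rwa [List.take_length]⟩
  set k := Nat.find hex with hk
  have hspec : ¬ cs.IsReduced (ω.take k) := Nat.find_spec hex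
  have hmin : ∀ k' < k, cs.IsReduced (ω.take k') := fun k' h => by
    by_contra hc
    exact Nat.find_min hex h hc
  have hk1 : 1 ≤ k := by
    rcases Nat.eq_zero_or_pos k with h | h
    · exfalso
      apply hspec
      rw [h]
      simp [CoxeterSystem.IsReduced]
    · exact h
  have hkle : k ≤ ω.length := by
    by_contra hc
    push_neg at hc
    apply hspec
    rw [List.take_of_length_le (by omega)]
    have := hmin ω.length hc
    rwa [List.take_length] at this
  have hklt : k - 1 < ω.length := by omega
  set t := ω.get ⟨k - 1, hklt⟩ with ht
  set u := ω.take (k - 1) with hu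
  have hured : cs.IsReduced u := hmin (k - 1) (by omega)
  have htake : ω.take k = u ++ [t] := by
    have : k = (k - 1) + 1 := by omega
    rw [this, List.take_succ, hu, ht]
    congr 1
    rw [List.getElem?_eq_getElem hklt]
    rfl
  have hulen : u.length = k - 1 := by
    rw [hu, List.length_take]
    omega
  have hdes : cs.IsRightDescent (cs.wordProd u) t := by
    have hlt : cs.length (cs.wordProd (ω.take k)) ≠ (ω.take k).length := hspec
    have hlen2 : (ω.take k).length = k := by rw [List.length_take]; omega
    have hprod : cs.wordProd (ω.take k) = cs.wordProd u * cs.simple t := by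
      rw [htake, cs.wordProd_append, wordProd_singleton]
    have hlu : cs.length (cs.wordProd u) = k - 1 := by
      have : cs.length (cs.wordProd u) = u.length := hured
      omega
    rcases cs.length_mul_simple (cs.wordProd u) t with h1 | h1
    · exfalso
      apply hlt
      rw [hprod, hlen2, h1, hlu]
      omega
    · unfold CoxeterSystem.IsRightDescent
      omega
  obtain ⟨ω₁, ω₂, heq, hcomm⟩ := lemmaL cs hra u.length u rfl hured t hdes
  refine ⟨ω₁, ω₂, ω.drop k, t, ?_, hcomm⟩
  conv_lhs => rw [← List.take_append_drop k ω]
  rw [htake, heq]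
  simp

end Cox

noncomputable def eps (e : ℤ) : LaurentZ := if Even e then 1 else -1

theorem qL_mul_T_neg_one : qL * (T (-1) : LaurentZ) = 1 := by
  rw [qL, ← T_add]; norm_num

section Hecke
variable {B : Type*} {R : Type*} [Group R] {M : CoxeterMatrix B}
  (cs : CoxeterSystem M R)
  {H : Type*} [Ring H] [Algebra LaurentZ H] (Tb : Module.Basis R LaurentZ H)
  (hone : Tb 1 = 1)
  (hmul_lt : ∀ (w : R) (s : B), cs.length w < cs.length (w * cs.simple s) →
      Tb w * Tb (cs.simple s) = Tb (w * cs.simple s))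
  (hmul_gt : ∀ (w : R) (s : B), cs.length (w * cs.simple s) < cs.length w →
      Tb w * Tb (cs.simple s) = qL • Tb (w * cs.simple s) + (qL - 1) • Tb w)

include hone hmul_gt in
theorem Tsq (s : B) :
    Tb (cs.simple s) * Tb (cs.simple s) = qL • 1 + (qL - 1) • Tb (cs.simple s) := by
  have h := hmul_gt (cs.simple s) s (by
    rw [cs.simple_mul_simple_self, cs.length_one, cs.length_simple]; omega)
  rw [cs.simple_mul_simple_self] at h
  rw [h, hone]

include hone hmul_gt in
theorem span_mul (s : B) (a b c d : LaurentZ) :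
    (a • (1:H) + b • Tb (cs.simple s)) * (c • 1 + d • Tb (cs.simple s))
      = (a*c + b*d*qL) • 1 + (a*d + b*c + b*d*(qL-1)) • Tb (cs.simple s) := by
  have h := Tsq cs Tb hone hmul_gt s
  rw [mul_add, add_mul, add_mul]
  rw [smul_mul_assoc, smul_mul_assoc, smul_mul_assoc, smul_mul_assoc,
    mul_smul_comm, mul_smul_comm, mul_smul_comm, mul_smul_comm, h]
  simp only [smul_add, smul_smul, one_mul, mul_one]
  module

include hone hmul_gt in
theorem inv_val (s : B) (x : Hˣ) (hx : (x : H) = Tb (cs.simple s)) :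
    ((x⁻¹ : Hˣ) : H) = ((T (-1) : LaurentZ) - 1) • 1 + (T (-1) : LaurentZ) • Tb (cs.simple s) := by
  apply Units.inv_eq_of_mul_eq_one_right
  have hc : (T (-1) : LaurentZ) * qL = 1 := by rw [mul_comm]; exact qL_mul_T_neg_one
  have hx' : (x : H) = (0:LaurentZ) • 1 + (1:LaurentZ) • Tb (cs.simple s) := by
    rw [hx, zero_smul, one_smul, zero_add]
  rw [hx', span_mul cs Tb hone hmul_gt]
  have e1 : (0:LaurentZ) * ((T (-1) : LaurentZ) - 1) + 1 * (T (-1):LaurentZ) * qL = 1 := by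
    linear_combination hc
  have e2 : (0:LaurentZ) * (T (-1):LaurentZ) + 1 * ((T (-1):LaurentZ) - 1)
      + 1 * (T (-1):LaurentZ) * (qL - 1) = 0 := by
    linear_combination hc
  rw [e1, e2, one_smul, zero_smul, add_zero]

include hone hmul_gt in
theorem pow_val (s : B) (x : Hˣ) (hx : (x : H) = Tb (cs.simple s)) (e : ℤ) :
    ∃ a b : LaurentZ, ((x ^ e : Hˣ) : H) = a • 1 + b • Tb (cs.simple s)
      ∧ (qL + 1) * a = T e + qL * eps e ∧ (qL + 1) * b = T e - eps e := by
  have hc : (T (-1) : LaurentZ) * qL = 1 := by rw [mul_comm]; exact qL_mul_T_neg_one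
  have heps : ∀ m : ℤ, eps (m + 1) = - eps m := by
    intro m
    unfold eps
    rcases Int.even_or_odd m with h | h
    · rw [if_pos h, if_neg (by simp [Int.even_add_one, h])]
    · rw [if_neg (Int.not_even_iff_odd.mpr h),
        if_pos (by simp [Int.even_add_one, Int.not_even_iff_odd.mpr h, h]), neg_neg]
  induction e using Int.induction_on with
  | zero =>
    refine ⟨1, 0, by simp, ?_, ?_⟩
    · simp [eps, qL, T_zero]; ring
    · simp [eps, T_zero]
  | succ n ih =>
    obtain ⟨a, b, hab, ha, hb⟩ := ih
    have hT : (T ((n:ℤ)+1) : LaurentZ) = qL * T (n:ℤ) := by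
      rw [qL, ← T_add, add_comm]
    have he := heps (n:ℤ)
    refine ⟨a*0 + b*1*qL, a*1 + b*0 + b*1*(qL-1), ?_, ?_, ?_⟩
    · have hstep : (x ^ ((n:ℤ) + 1) : Hˣ) = x ^ (n:ℤ) * x := by
        rw [zpow_add_one]
      have hsm := span_mul cs Tb hone hmul_gt s a b 0 1
      rw [zero_smul, one_smul, zero_add] at hsm
      rw [hstep, Units.val_mul, hab, hx]
      exact hsm
    · rw [hT, he]
      linear_combination qL * hb
    · rw [hT, he]
      linear_combination ha + (qL - 1) * hb
  | pred n ih =>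
    obtain ⟨a, b, hab, ha, hb⟩ := ih
    have hT : (T (-(n:ℤ)-1) : LaurentZ) = T (-(n:ℤ)) * T (-1) := by
      rw [← T_add]; ring_nf
    have he : eps (-(n:ℤ)-1) = - eps (-(n:ℤ)) := by
      have := heps (-(n:ℤ)-1)
      rw [sub_add_cancel] at this
      rw [this, neg_neg]
    refine ⟨a*((T (-1):LaurentZ)-1) + b*(T (-1):LaurentZ)*qL,
      a*(T (-1):LaurentZ) + b*((T (-1):LaurentZ)-1) + b*(T (-1):LaurentZ)*(qL-1), ?_, ?_, ?_⟩
    · have hstep : (x ^ (-(n:ℤ) - 1) : Hˣ) = x ^ (-(n:ℤ)) * x⁻¹ := by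
        rw [zpow_sub_one]
      rw [hstep, Units.val_mul, hab, inv_val cs Tb hone hmul_gt s x hx]
      exact span_mul cs Tb hone hmul_gt s a b ((T (-1):LaurentZ) - 1) (T (-1):LaurentZ)
    · rw [hT, he]
      linear_combination ((T (-1):LaurentZ)-1)*ha + (T (-1):LaurentZ)*qL*hb
        + (T (-(n:ℤ)):LaurentZ)*hc
    · rw [hT, he]
      linear_combination (T (-1):LaurentZ)*ha
        + ((T (-1):LaurentZ) - 1 + (T (-1):LaurentZ)*(qL-1))*hb + (T (-(n:ℤ)):LaurentZ)*hc
include hmul_lt hmul_gt in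
theorem repr_single_mul_simple (v : R) (s : B) (a : LaurentZ) (w : R)
    (hv : cs.length v < cs.length w) (hvs : v * cs.simple s ≠ w) :
    Tb.repr ((a • Tb v) * Tb (cs.simple s)) w = 0 := by
  classical
  rw [smul_mul_assoc, map_smul]
  rcases Nat.lt_or_ge (cs.length v) (cs.length (v * cs.simple s)) with hlt | hge
  · rw [hmul_lt v s hlt, Tb.repr_self]
    simp [Finsupp.single_apply, hvs]
  · have hne := cs.length_mul_simple_ne v s
    have hgt : cs.length (v * cs.simple s) < cs.length v := by omega
    rw [hmul_gt v s hgt, map_add, map_smul, map_smul, Tb.repr_self, Tb.repr_self]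
    have hvw : v ≠ w := by intro h; subst h; omega
    simp [Finsupp.single_apply, hvs, hvw]

include hmul_lt hmul_gt in
theorem repr_mul_simple_bound {Y : H} {n : ℕ}
    (hY : ∀ v : R, n < cs.length v → Tb.repr Y v = 0)
    {w : R} (hw : n + 1 < cs.length w) (s : B) :
    Tb.repr (Y * Tb (cs.simple s)) w = 0 := by
  classical
  conv_lhs => rw [← Tb.linearCombination_repr Y, Finsupp.linearCombination_apply]
  rw [Finsupp.sum_mul]
  unfold Finsupp.sum
  rw [map_sum, Finset.sum_apply']
  apply Finset.sum_eq_zero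
  intro v hv
  have hvn : cs.length v ≤ n := by
    by_contra hcon
    exact (Finsupp.mem_support_iff.mp hv) (hY v (by omega))
  apply repr_single_mul_simple cs Tb hmul_lt hmul_gt v s _ w (by omega)
  intro h
  have := cs.length_mul_le v (cs.simple s)
  rw [h, cs.length_simple] at this
  omega

include hmul_lt hmul_gt in
theorem repr_mul_simple_top {Y : H} {n : ℕ}
    (hY : ∀ v : R, n < cs.length v → Tb.repr Y v = 0)
    {w : R} (hw : cs.length w = n + 1) (s : B) :
    Tb.repr (Y * Tb (cs.simple s)) w = Tb.repr Y (w * cs.simple s) := by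
  classical
  conv_lhs => rw [← Tb.linearCombination_repr Y, Finsupp.linearCombination_apply]
  rw [Finsupp.sum_mul]
  unfold Finsupp.sum
  rw [map_sum, Finset.sum_apply']
  rw [Finset.sum_eq_single (w * cs.simple s)]
  · dsimp only
    by_cases hmem : Tb.repr Y (w * cs.simple s) = 0
    · rw [hmem, zero_smul, zero_mul, map_zero, Finsupp.zero_apply]
    · set v := w * cs.simple s with hv
      have hvs : v * cs.simple s = w := by rw [hv, cs.simple_mul_simple_cancel_right]
      have hvlen : cs.length v ≤ n := by
        by_contra hcon
        exact hmem (hY v (by omega))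
      have hasc : cs.length v < cs.length (v * cs.simple s) := by rw [hvs]; omega
      rw [smul_mul_assoc, map_smul, hmul_lt v s hasc, Tb.repr_self, hvs]
      simp [Finsupp.single_apply]
  · intro v hvmem hvne
    dsimp only
    have hvn : cs.length v ≤ n := by
      by_contra hcon
      exact (Finsupp.mem_support_iff.mp hvmem) (hY v (by omega))
    apply repr_single_mul_simple cs Tb hmul_lt hmul_gt v s _ w (by omega)
    intro h
    apply hvne
    rw [← h, cs.simple_mul_simple_cancel_right]
  · intro hnot
    dsimp only
    rw [Finsupp.notMem_support_iff.mp hnot, zero_smul, zero_mul, map_zero, Finsupp.zero_apply]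
end Hecke

theorem eps_zero : eps 0 = 1 := by simp [eps]

theorem T_sub_eps_ne_zero (e : ℤ) (he : e ≠ 0) : (LaurentPolynomial.T e : LaurentZ) - eps e ≠ 0 := by
  intro hh
  rw [sub_eq_zero] at hh
  have h0 : (LaurentPolynomial.T e : LaurentZ).coeff e = (eps e).coeff e := by rw [hh]
  rw [LaurentPolynomial.T_apply, if_pos rfl] at h0
  unfold eps at h0
  have hT0 : (LaurentPolynomial.T 0 : LaurentZ).coeff e = 0 := by
    rw [LaurentPolynomial.T_apply, if_neg (Ne.symm he)]
  split at h0 <;>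
  · rw [show (1 : LaurentZ) = LaurentPolynomial.T 0 from LaurentPolynomial.T_zero.symm] at h0
    first
    | (rw [hT0] at h0; omega)
    | (rw [show ((-LaurentPolynomial.T 0 : LaurentZ)).coeff e = -((LaurentPolynomial.T 0 : LaurentZ).coeff e)
          from by simp, hT0] at h0; omega)

section Artin
variable {B : Type*} {M : CoxeterMatrix B}

/-- the generator of the Artin group, typed in `ArtinGroup M` -/
def ofA (M : CoxeterMatrix B) (s : B) : ArtinGroup M := PresentedGroup.of s

theorem artin_comm {s t : B} (h : M s t = 2) :
    Commute (ofA M s) (ofA M t) := by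
  rw [← commutatorElement_eq_one_iff_commute]
  have hrel : FreeGroup.of s * FreeGroup.of t * (FreeGroup.of s)⁻¹ * (FreeGroup.of t)⁻¹ ∈
      Subgroup.normalClosure (artinRels M) :=
    Subgroup.subset_normalClosure ⟨s, t, h, rfl⟩
  have h1 : ((QuotientGroup.mk (FreeGroup.of s * FreeGroup.of t * (FreeGroup.of s)⁻¹ *
      (FreeGroup.of t)⁻¹) : PresentedGroup (artinRels M))) = 1 :=
    (QuotientGroup.eq_one_iff _).mpr hrel
  simp only [QuotientGroup.mk_mul, QuotientGroup.mk_inv] at h1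
  exact h1

/-- product of syllables in the Artin group -/
def prodA (M : CoxeterMatrix B) (L : List (B × ℤ)) : ArtinGroup M :=
  (L.map (fun p => ofA M p.1 ^ p.2)).prod

theorem prodA_nil : prodA M [] = 1 := rfl

theorem prodA_append (X Y : List (B × ℤ)) :
    prodA M (X ++ Y) = prodA M X * prodA M Y := by
  unfold prodA
  rw [List.map_append, List.prod_append]

theorem prodA_cons (p : B × ℤ) (L : List (B × ℤ)) :
    prodA M (p :: L) = ofA M p.1 ^ p.2 * prodA M L := by
  unfold prodA
  rw [List.map_cons, List.prod_cons]

theorem exists_syllables (g : ArtinGroup M) :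
    ∃ L : List (B × ℤ), (∀ p ∈ L, p.2 ≠ 0) ∧ g = prodA M L := by
  obtain ⟨w, rfl⟩ := QuotientGroup.mk_surjective g
  induction w using FreeGroup.induction_on with
  | C1 =>
    refine ⟨[], by simp, ?_⟩
    rw [prodA_nil]
    rfl
  | of x =>
    refine ⟨[(x, 1)], by simp, ?_⟩
    rw [prodA_cons, prodA_nil, mul_one, zpow_one]
    rfl
  | inv_of x _ =>
    refine ⟨[(x, -1)], by simp, ?_⟩
    rw [prodA_cons, prodA_nil, mul_one, zpow_neg_one]
    rfl
  | mul x y hx hy =>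
    obtain ⟨Lx, hx1, hx2⟩ := hx
    obtain ⟨Ly, hy1, hy2⟩ := hy
    refine ⟨Lx ++ Ly, ?_, ?_⟩
    · intro p hp
      rcases List.mem_append.mp hp with h | h
      · exact hx1 p h
      · exact hy1 p h
    · rw [prodA_append, ← hx2, ← hy2]
      rfl

theorem map_fst_split {L : List (B × ℤ)} {A Z : List B} {t : B}
    (h : L.map Prod.fst = A ++ t :: Z) :
    ∃ L₁ e L₂, L = L₁ ++ (t, e) :: L₂ ∧ L₁.map Prod.fst = A ∧ L₂.map Prod.fst = Z := by
  induction A generalizing L with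
  | nil =>
    cases L with
    | nil => simp at h
    | cons p L' =>
      obtain ⟨pa, pe⟩ := p
      simp only [List.map_cons, List.nil_append, List.cons.injEq] at h
      obtain ⟨h1, h2⟩ := h
      subst h1
      exact ⟨[], pe, L', rfl, rfl, h2⟩
  | cons a A ih =>
    cases L with
    | nil => simp at h
    | cons p L' =>
      obtain ⟨pa, pe⟩ := p
      simp only [List.map_cons, List.cons_append, List.cons.injEq] at h
      obtain ⟨h1, h2⟩ := h
      subst h1
      obtain ⟨L₁, e, L₂, h3, h4, h5⟩ := ih h2
      exact ⟨(pa, pe) :: L₁, e, L₂, by rw [h3]; rfl, by simp [h4], h5⟩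

end Artin

section Main
variable {B : Type*} [DecidableEq B] {R : Type*} [Group R] {M : CoxeterMatrix B}
  (cs : CoxeterSystem M R)
  (hra : ∀ s t : B, s ≠ t → M s t = 2 ∨ M s t = 0)
  {H : Type*} [Ring H] [Algebra LaurentZ H] (Tb : Module.Basis R LaurentZ H)
  (hone : Tb 1 = 1)
  (hmul_lt : ∀ (w : R) (s : B), cs.length w < cs.length (w * cs.simple s) →
      Tb w * Tb (cs.simple s) = Tb (w * cs.simple s))
  (hmul_gt : ∀ (w : R) (s : B), cs.length (w * cs.simple s) < cs.length w →
      Tb w * Tb (cs.simple s) = qL • Tb (w * cs.simple s) + (qL - 1) • Tb w)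
  (φ : ArtinGroup M →* Hˣ)
  (hφ : ∀ s : B, (φ (ofA M s) : H) = Tb (cs.simple s))

include hone hmul_lt hmul_gt hφ in
theorem prodA_repr_bound (L : List (B × ℤ)) :
    ∀ w : R, L.length < cs.length w → Tb.repr ((φ (prodA M L) : H)) w = 0 := by
  classical
  induction L using List.reverseRecOn with
  | nil =>
    intro w hw
    have hw1 : w ≠ 1 := by
      intro h
      rw [h, cs.length_one] at hw
      omega
    rw [prodA_nil, map_one φ, Units.val_one, ← hone, Tb.repr_self, Finsupp.single_apply,
      if_neg (fun h => hw1 h.symm)]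
  | append_singleton L p ih =>
    intro w hw
    have hw' : L.length + 1 < cs.length w := by
      rw [List.length_append, List.length_singleton] at hw
      omega
    have hstep : ((φ (prodA M (L ++ [p])) : Hˣ) : H)
        = ((φ (prodA M L) : Hˣ) : H) * ((φ (ofA M p.1) ^ p.2 : Hˣ) : H) := by
      rw [prodA_append, prodA_cons, prodA_nil, mul_one, map_mul, map_zpow, Units.val_mul]
    obtain ⟨a, b, hab, ha, hb⟩ := pow_val cs Tb hone hmul_gt p.1 (φ (ofA M p.1)) (hφ p.1) p.2
    rw [hstep, hab, mul_add, mul_smul_comm, mul_one, mul_smul_comm, map_add, map_smul, map_smul,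
      Finsupp.add_apply, Finsupp.smul_apply, Finsupp.smul_apply, smul_eq_mul, smul_eq_mul,
      ih w (by omega),
      repr_mul_simple_bound cs Tb hmul_lt hmul_gt (fun v hv => ih v (by omega)) hw' p.1]
    ring

include hone hmul_lt hmul_gt hφ in
theorem prodA_repr_top (L : List (B × ℤ)) (hred : cs.IsReduced (L.map Prod.fst)) :
    (qL + 1) ^ L.length * Tb.repr ((φ (prodA M L) : H)) (cs.wordProd (L.map Prod.fst))
      = (L.map (fun p => (LaurentPolynomial.T p.2 : LaurentZ) - eps p.2)).prod := by
  classical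
  induction L using List.reverseRecOn with
  | nil =>
    rw [prodA_nil, map_one φ, Units.val_one, ← hone, Tb.repr_self, List.map_nil, wordProd_nil,
      Finsupp.single_apply, if_pos rfl]
    simp
  | append_singleton L p ih =>
    have hmap : (L ++ [p]).map Prod.fst = L.map Prod.fst ++ [p.1] := by simp
    rw [hmap] at hred ⊢
    have hredL : cs.IsReduced (L.map Prod.fst) := by
      have := CoxeterSystem.IsReduced.take hred (L.map Prod.fst).length
      rwa [List.take_left] at this
    set W := cs.wordProd (L.map Prod.fst ++ [p.1]) with hW
    have hWdef : W = cs.wordProd (L.map Prod.fst) * cs.simple p.1 := by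
      rw [hW, cs.wordProd_append, wordProd_singleton]
    have hlW : cs.length W = L.length + 1 := by
      have h1 : cs.length W = (L.map Prod.fst ++ [p.1]).length := hred
      rw [h1, List.length_append, List.length_singleton, List.length_map]
    have hWs : W * cs.simple p.1 = cs.wordProd (L.map Prod.fst) := by
      rw [hWdef, cs.simple_mul_simple_cancel_right]
    have hstep : ((φ (prodA M (L ++ [p])) : Hˣ) : H)
        = ((φ (prodA M L) : Hˣ) : H) * ((φ (ofA M p.1) ^ p.2 : Hˣ) : H) := by
      rw [prodA_append, prodA_cons, prodA_nil, mul_one, map_mul, map_zpow, Units.val_mul]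
    obtain ⟨a, b, hab, ha, hb⟩ := pow_val cs Tb hone hmul_gt p.1 (φ (ofA M p.1)) (hφ p.1) p.2
    have hbnd : ∀ v : R, L.length < cs.length v →
        Tb.repr ((φ (prodA M L) : Hˣ) : H) v = 0 :=
      fun v hv => prodA_repr_bound cs Tb hone hmul_lt hmul_gt φ hφ L v hv
    rw [hstep, hab, mul_add, mul_smul_comm, mul_one, mul_smul_comm, map_add, map_smul, map_smul,
      Finsupp.add_apply, Finsupp.smul_apply, Finsupp.smul_apply, smul_eq_mul, smul_eq_mul,
      hbnd W (by omega),
      repr_mul_simple_top cs Tb hmul_lt hmul_gt hbnd hlW p.1, hWs,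
      List.length_append, List.length_singleton, List.map_append, List.prod_append,
      List.map_singleton, List.prod_singleton]
    linear_combination ((qL+1) ^ L.length
        * (Tb.repr ((φ (prodA M L) : Hˣ) : H) (cs.wordProd (L.map Prod.fst)))) * hb
      + ((LaurentPolynomial.T p.2 : LaurentZ) - eps p.2) * ih hredL

include hra hone hmul_lt hmul_gt hφ in
theorem ker_aux : ∀ n : ℕ, ∀ L : List (B × ℤ), L.length ≤ n → (∀ p ∈ L, p.2 ≠ 0) →
    φ (prodA M L) = 1 → prodA M L = 1 := by
  classical
  intro n
  induction n using Nat.strong_induction_on with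
  | _ n IH =>
    intro L hLn hLnz hφL
    by_cases hred : cs.IsReduced (L.map Prod.fst)
    · rcases List.eq_nil_or_concat L with rfl | ⟨L', p, rfl⟩
      · rfl
      · exfalso
        rw [List.concat_eq_append] at *
        have htop := prodA_repr_top cs Tb hone hmul_lt hmul_gt φ hφ (L' ++ [p]) hred
        rw [hφL, Units.val_one] at htop
        have hlW : cs.length (cs.wordProd ((L' ++ [p]).map Prod.fst)) = L'.length + 1 := by
          have h1 := hred
          unfold CoxeterSystem.IsReduced at h1
          rw [h1, List.length_map, List.length_append, List.length_singleton]
        have hWne : cs.wordProd ((L' ++ [p]).map Prod.fst) ≠ 1 := by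
          intro h
          rw [h, cs.length_one] at hlW
          omega
        rw [← hone, Tb.repr_self, Finsupp.single_apply, if_neg (fun h => hWne h.symm),
          mul_zero] at htop
        have h0 : (0 : LaurentZ) ∈ (L' ++ [p]).map
            (fun p => (LaurentPolynomial.T p.2 : LaurentZ) - eps p.2) := by
          rw [← List.prod_eq_zero_iff, ← htop]
        obtain ⟨q, hq, hq0⟩ := List.mem_map.mp h0
        exact T_sub_eps_ne_zero q.2 (hLnz q hq) hq0
    · obtain ⟨ω₁, ω₂, ω₃, t, heq, hcomm⟩ := deletion cs hra (L.map Prod.fst) hred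
      obtain ⟨L₁, e₁, L', hL1, hm1, hm2⟩ := map_fst_split heq
      obtain ⟨L₂, e₂, L₃, hL2, hm3, hm4⟩ := map_fst_split hm2
      subst hL2
      subst hL1
      have hcm : Commute (ofA M t ^ e₁) (prodA M L₂) := by
        apply Commute.list_prod_right
        intro y hy
        obtain ⟨q, hq, rfl⟩ := List.mem_map.mp hy
        have hM : M t q.1 = 2 := hcomm q.1 (by rw [← hm3]; exact List.mem_map_of_mem hq)
        exact (artin_comm hM).zpow_zpow e₁ q.2
      have hsplit : prodA M (L₁ ++ (t, e₁) :: (L₂ ++ (t, e₂) :: L₃))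
          = prodA M L₁ * (prodA M L₂ * (ofA M t ^ (e₁ + e₂) * prodA M L₃)) := by
        rw [prodA_append, prodA_cons, prodA_append, prodA_cons]
        dsimp only
        rw [← mul_assoc (ofA M t ^ e₁), hcm.eq, mul_assoc, ← mul_assoc (ofA M t ^ e₁),
          ← zpow_add]
      have hlen : (L₁ ++ (t, e₁) :: (L₂ ++ (t, e₂) :: L₃)).length
          = L₁.length + L₂.length + L₃.length + 2 := by
        simp
        omega
      have hmem : ∀ q ∈ L₁ ++ L₂ ++ L₃, q.2 ≠ 0 := by
        intro q hq
        apply hLnz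
        simp only [List.mem_append, List.mem_cons] at hq ⊢
        tauto
      rcases eq_or_ne (e₁ + e₂) 0 with h0 | h0
      · have hprod : prodA M (L₁ ++ (t, e₁) :: (L₂ ++ (t, e₂) :: L₃))
            = prodA M (L₁ ++ L₂ ++ L₃) := by
          rw [hsplit, h0, zpow_zero, one_mul, prodA_append, prodA_append, mul_assoc]
        rw [hprod] at hφL ⊢
        apply IH (n - 1) (by omega) _ (by simp at hLn ⊢; omega) hmem hφL
      · have hprod : prodA M (L₁ ++ (t, e₁) :: (L₂ ++ (t, e₂) :: L₃))
            = prodA M (L₁ ++ L₂ ++ ((t, e₁ + e₂) :: L₃)) := by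
          rw [hsplit, prodA_append, prodA_append, prodA_cons, mul_assoc]
        have hmem2 : ∀ q ∈ L₁ ++ L₂ ++ ((t, e₁ + e₂) :: L₃), q.2 ≠ 0 := by
          intro q hq
          simp only [List.mem_append, List.mem_cons] at hq
          rcases hq with (h | h) | h | h
          · exact hmem q (by simp [h])
          · exact hmem q (by simp [h])
          · rw [h]
            exact h0
          · exact hmem q (by simp [h])
        rw [hprod] at hφL ⊢
        apply IH (n - 1) (by omega) _ (by simp at hLn ⊢; omega) hmem2 hφL

end Main

theorem stmt_19 {R : Type*} [Group R] {M : CoxeterMatrix B} (cs : CoxeterSystem M R)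
    -- `(R, S)` is right-angled: all off-diagonal entries are `2` or `∞` (encoded as `0`)
    (hra : ∀ s t : B, s ≠ t → M s t = 2 ∨ M s t = 0)
    -- the Hecke algebra `H(R)`, presented by its standard basis and multiplication rules
    (H : Type*) [Ring H] [Algebra LaurentZ H] (T : Module.Basis R LaurentZ H)
    (hone : T 1 = 1)
    (hmul_lt : ∀ (w : R) (s : B), cs.length w < cs.length (w * cs.simple s) →
      T w * T (cs.simple s) = T (w * cs.simple s))
    (hmul_gt : ∀ (w : R) (s : B), cs.length (w * cs.simple s) < cs.length w →
      T w * T (cs.simple s) = qL • T (w * cs.simple s) + (qL - 1) • T w)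
    -- the group morphism `φ : R^A → H(R)*` determined by `φ(s) = T_s`
    (φ : ArtinGroup M →* Hˣ)
    (hφ : ∀ s : B, (φ (PresentedGroup.of s : ArtinGroup M) : H) = T (cs.simple s)) :
    Function.Injective φ := by
  classical
  rw [injective_iff_map_eq_one]
  intro g hg
  obtain ⟨L, hLnz, rfl⟩ := exists_syllables g
  exact ker_aux cs hra T hone hmul_lt hmul_gt φ (fun s => hφ s) L.length L le_rfl hLnz hg
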